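/- If 𝔰𝔱 < ℵ_{ω₁} then 𝔰𝔱 = 𝔰𝔱'; in particular, under this hypothesis 𝔰𝔱'' ≤ 𝔰𝔱. -/

import Mathlib

open Cardinal Set

/-- `X` is a `𝔰𝔱_l`-family on (the canonical type of order type) `l`:
a collection of countably infinite subsets of `l` such that every subset of
cardinality `ℵ₁` contains a member of `X`. -/
def IsStickFam (l : Cardinal) (X : Set (Set l.ord.ToType)) : Prop :=
  (∀ x ∈ X, #x = ℵ₀) ∧
    ∀ y : Set l.ord.ToType, #y = aleph 1 → ∃ x ∈ X, x ⊆ y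

/-- The cardinal `𝔰𝔱_l`. -/
noncomputable def stickL (l : Cardinal) : Cardinal :=
  sInf {c | ∃ X : Set (Set l.ord.ToType), IsStickFam l X ∧ #X = c}

/-- The cardinal `𝔰𝔱` (`= 𝔰𝔱_{ℵ₁}`). -/
noncomputable def stick : Cardinal := stickL (aleph 1)

/-- The cardinal `𝔰𝔱'`: the least `κ ≥ ℵ₁` carrying a stick family of size `κ`. -/
noncomputable def stick' : Cardinal :=
  sInf {k | aleph 1 ≤ k ∧ ∃ X : Set (Set k.ord.ToType), IsStickFam k X ∧ #X = k}

/-- The cardinal `𝔰𝔱''`: the least `κ ≥ ℵ₁` carrying a family of size `κ` of countably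
infinite subsets of `κ` such that every subset of `κ` of cardinality `κ` contains a member. -/
noncomputable def stick'' : Cardinal :=
  sInf {k | aleph 1 ≤ k ∧ ∃ X : Set (Set k.ord.ToType),
    (∀ x ∈ X, #x = ℵ₀) ∧ (∀ y : Set k.ord.ToType, #y = k → ∃ x ∈ X, x ⊆ y) ∧ #X = k}

universe u

namespace StickAux

open Ordinal

instance (o : Ordinal) : IsWellOrder o.ToType (· < ·) := isWellOrder_lt

/-- A family of countably infinite subsets of `s` such that every subset of `s`
of size `ℵ₁` contains a member. -/
def FamOn {α : Type u} (s : Set α) (X : Set (Set α)) : Prop :=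
  (∀ x ∈ X, x ⊆ s ∧ #x = ℵ₀) ∧ ∀ y ⊆ s, #y = aleph 1 → ∃ x ∈ X, x ⊆ y

theorem aleph_one_eq : (aleph 1 : Cardinal.{u}) = Order.succ ℵ₀ := by
  rw [show (1 : Ordinal.{u}) = Order.succ 0 by simp, aleph_succ, aleph_zero]

theorem le_aleph0_of_lt_aleph_one {c : Cardinal.{u}} (h : c < aleph 1) : c ≤ ℵ₀ := by
  rwa [aleph_one_eq, Order.lt_succ_iff] at h

theorem le_of_lt_aleph_succ {o : Ordinal.{u}} {c : Cardinal.{u}}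
    (h : c < aleph (Order.succ o)) : c ≤ aleph o := by
  rwa [aleph_succ, Order.lt_succ_iff] at h

theorem famOn_pullback {α β : Type u} {t : Set β} {X' : Set (Set β)} (h : FamOn t X')
    (f : α → β) {s : Set α} (hf : InjOn f s) (hfs : f '' s ⊆ t) :
    ∃ X : Set (Set α), FamOn s X ∧ #X ≤ #X' := by
  refine ⟨(fun x => s ∩ f ⁻¹' x) '' {x ∈ X' | x ⊆ f '' s}, ⟨?_, ?_⟩, ?_⟩
  · rintro x' ⟨x, ⟨hxX, hxs⟩, rfl⟩
    refine ⟨inter_subset_left, ?_⟩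
    have hbij : BijOn f (s ∩ f ⁻¹' x) x := by
      refine ⟨fun a ha => ha.2, hf.mono inter_subset_left, fun b hb => ?_⟩
      obtain ⟨a, ha, rfl⟩ := hxs hb
      exact ⟨a, ⟨ha, hb⟩, rfl⟩
    rw [mk_congr (Set.BijOn.equiv f hbij)]
    exact (h.1 x hxX).2
  · intro y hys hy
    have h1 : #(f '' y) = aleph 1 := by rw [mk_image_eq_of_injOn f y (hf.mono hys)]; exact hy
    obtain ⟨x, hxX, hxy⟩ := h.2 (f '' y) ((image_mono (f := f) hys).trans hfs) h1
    refine ⟨s ∩ f ⁻¹' x, mem_image_of_mem _ ⟨hxX, hxy.trans (image_mono (f := f) hys)⟩, ?_⟩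
    rintro a ⟨has, hax⟩
    obtain ⟨b, hby, hba⟩ := hxy hax
    exact hf (hys hby) has hba ▸ hby
  · exact mk_image_le.trans (mk_le_mk_of_subset (sep_subset _ _))

theorem famOn_iUnion {α : Type u} {ι : Type u} {s : Set α} {t : ι → Set α}
    {X : ι → Set (Set α)} (hts : ∀ i, t i ⊆ s) (hX : ∀ i, FamOn (t i) (X i))
    (hcov : ∀ y, y ⊆ s → #y = aleph 1 → ∃ i, #(↥(y ∩ t i)) = aleph 1) :
    FamOn s (⋃ i, X i) := by
  constructor
  · intro x hx
    obtain ⟨i, hi⟩ := mem_iUnion.1 hx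
    exact ⟨((hX i).1 x hi).1.trans (hts i), ((hX i).1 x hi).2⟩
  · intro y hys hy
    obtain ⟨i, hi⟩ := hcov y hys hy
    obtain ⟨x, hx, hxy⟩ := (hX i).2 (y ∩ t i) inter_subset_right hi
    exact ⟨x, mem_iUnion.2 ⟨i, hx⟩, hxy.trans inter_subset_left⟩

theorem mk_iUnion_bound {γ ι : Type u} {X : ι → Set γ} {c : Cardinal.{u}}
    (h : ∀ i, #(X i) ≤ c) : #(⋃ i, X i) ≤ #ι * c :=
  mk_iUnion_le_sum_mk.trans ((sum_le_sum _ _ h).trans_eq (sum_const' ι c))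

theorem exists_inter_aleph_one {α ι : Type u} [Countable ι] {y : Set α}
    (hy : #y = aleph 1) {t : ι → Set α} (hcov : y ⊆ ⋃ i, t i) :
    ∃ i, #(↥(y ∩ t i)) = aleph 1 := by
  by_contra hc
  push_neg at hc
  have hle : ∀ i, #(↥(y ∩ t i)) ≤ ℵ₀ := fun i => by
    refine le_aleph0_of_lt_aleph_one (lt_of_le_of_ne ?_ (hc i))
    rw [← hy]; exact mk_le_mk_of_subset inter_subset_left
  have hsub : y ⊆ ⋃ i, y ∩ t i := by
    intro a ha
    obtain ⟨i, hi⟩ := mem_iUnion.1 (hcov ha)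
    exact mem_iUnion.2 ⟨i, ha, hi⟩
  have hya : #y ≤ ℵ₀ := by
    calc #y ≤ #(⋃ i, y ∩ t i) := mk_le_mk_of_subset hsub
    _ ≤ #ι * ℵ₀ := mk_iUnion_bound hle
    _ ≤ ℵ₀ * ℵ₀ := mul_le_mul' (mk_le_aleph0_iff.2 ‹Countable ι›) le_rfl
    _ = ℵ₀ := by simp
  rw [hy] at hya
  exact absurd hya (not_le.2 aleph0_lt_aleph_one)

theorem exists_injOn {α β : Type u} [Nonempty β] {s : Set α} {t : Set β} (h : #s ≤ #t) :
    ∃ f : α → β, InjOn f s ∧ f '' s ⊆ t := by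
  obtain ⟨e⟩ := (Cardinal.le_def _ _).1 h
  classical
  refine ⟨fun a => if ha : a ∈ s then (e ⟨a, ha⟩ : β) else Classical.arbitrary β, ?_, ?_⟩
  · intro a ha b hb hab
    simp only [dif_pos ha, dif_pos hb] at hab
    simpa using e.injective (Subtype.coe_injective hab)
  · rintro - ⟨a, ha, rfl⟩
    simp only [dif_pos ha]
    exact (e ⟨a, ha⟩).2

theorem key {W : Type u} {X₀ : Set (Set W)} (h₀ : FamOn (univ : Set W) X₀)
    (hW : #W = aleph 1) :
    ∀ β : Ordinal.{u}, β < (aleph 1).ord → ∀ {T : Type u} (s : Set T), #s ≤ aleph β →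
      ∃ X : Set (Set T), FamOn s X ∧ #X ≤ aleph β * #X₀ := by
  intro β₀
  induction β₀ using Ordinal.induction with
  | h β IH =>
  intro hβ T s hs
  by_cases hβ1 : β ≤ 1
  · -- base case : #s ≤ ℵ₁, pull back the family from W
    have hne : Nonempty W := mk_ne_zero_iff.1 (by rw [hW]; exact (aleph_pos 1).ne')
    have hsW : #s ≤ #(univ : Set W) := by
      rw [mk_univ, hW]
      exact hs.trans (aleph_le_aleph.2 hβ1)
    obtain ⟨f, hf, hfs⟩ := exists_injOn hsW
    obtain ⟨X, hX, hXc⟩ := famOn_pullback h₀ f hf hfs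
    exact ⟨X, hX, hXc.trans (Cardinal.le_mul_left (aleph_pos β).ne')⟩
  · rcases Ordinal.zero_or_succ_or_isSuccLimit β with h0 | ⟨δ, rfl⟩ | hlim
    · exact absurd (h0.le.trans zero_le_one) hβ1
    · -- successor case
      have hδβ : δ < Order.succ δ := Order.lt_succ δ
      have h1δ : 1 < Order.succ δ := not_le.1 hβ1
      have hBcard : #(aleph (Order.succ δ)).ord.ToType = aleph (Order.succ δ) := by
        rw [mk_toType, card_ord]
      have hBne : Nonempty (aleph (Order.succ δ)).ord.ToType :=
        mk_ne_zero_iff.1 (by rw [hBcard]; exact (aleph_pos _).ne')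
      obtain ⟨f, hf, -⟩ :=
        exists_injOn (s := s) (t := (univ : Set (aleph (Order.succ δ)).ord.ToType))
          (by rw [mk_univ, hBcard]; exact hs)
      set t : (aleph (Order.succ δ)).ord.ToType → Set T :=
        fun b => {a ∈ s | f a < b} with ht
      have hts : ∀ b, t b ⊆ s := fun b => sep_subset _ _
      have htc : ∀ b, #(t b) ≤ aleph δ := by
        intro b
        have h2 : #(t b) = #(f '' t b) := (mk_image_eq_of_injOn f _ (hf.mono (hts b))).symm
        have h3 : f '' t b ⊆ {c | c < b} := by rintro - ⟨a, ha, rfl⟩; exact ha.2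
        have h5 : (Ordinal.typein (α := (aleph (Order.succ δ)).ord.ToType) (· < ·) b).card
            ≤ aleph δ := le_of_lt_aleph_succ (lt_ord.1 (Ordinal.typein_lt_self b))
        rw [h2]
        exact (mk_le_mk_of_subset h3).trans (le_of_eq_of_le (Ordinal.card_typein (r := ((· < ·) : (aleph (Order.succ δ)).ord.ToType → _ → Prop)) b) h5)
      choose Xf hXf hXfc using fun b => IH δ hδβ (hδβ.trans hβ) (t b) (htc b)
      refine ⟨⋃ b, Xf b, famOn_iUnion hts hXf ?_, ?_⟩
      · intro y hys hy
        have hbd : ∃ b, ∀ c ∈ f '' y, c < b := by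
          by_contra hcon
          push_neg at hcon
          have hcof := Order.cof_le (s := f '' y) hcon
          rw [cof_toType, (isRegular_aleph_succ δ).cof_ord,
            mk_image_eq_of_injOn f y (hf.mono hys), hy] at hcof
          exact absurd hcof (not_le.2 (aleph_lt_aleph.2 h1δ))
        obtain ⟨b, hb⟩ := hbd
        refine ⟨b, ?_⟩
        have h7 : y ∩ t b = y :=
          inter_eq_self_of_subset_left fun a ha => ⟨hys ha, hb _ (mem_image_of_mem f ha)⟩
        rw [h7, hy]
      · refine (mk_iUnion_bound hXfc).trans ?_
        rw [hBcard, ← mul_assoc, Cardinal.mul_eq_max (aleph0_le_aleph _) (aleph0_le_aleph _),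
          sup_eq_left.2 (aleph_le_aleph.2 hδβ.le)]
    · -- limit case
      have hcβ : β.card ≤ ℵ₀ := le_aleph0_of_lt_aleph_one (lt_ord.1 hβ)
      have hcount : Countable β.ToType := mk_le_aleph0_iff.1 (by rw [mk_toType]; exact hcβ)
      have hBcard : #(aleph β).ord.ToType = aleph β := by rw [mk_toType, card_ord]
      have hBne : Nonempty (aleph β).ord.ToType :=
        mk_ne_zero_iff.1 (by rw [hBcard]; exact (aleph_pos _).ne')
      obtain ⟨f, hf, -⟩ := exists_injOn (s := s) (t := (univ : Set (aleph β).ord.ToType))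
        (by rw [mk_univ, hBcard]; exact hs)
      set idx : β.ToType → Ordinal := fun i => (((ToType.mk (o := β))).symm i : Ordinal) with hidx
      have hidxlt : ∀ i, idx i < β := fun i => (((ToType.mk (o := β))).symm i).2
      set bb : β.ToType → (aleph β).ord.ToType := fun i =>
        Ordinal.enum (α := (aleph β).ord.ToType) (· < ·)
          ⟨(aleph (idx i)).ord,
            show (aleph (idx i)).ord < type ((· < ·) :
                (aleph β).ord.ToType → (aleph β).ord.ToType → Prop) from by
              rw [type_toType]; exact ord_lt_ord.2 (aleph_lt_aleph.2 (hidxlt i))⟩ with hbb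
      have htypein : ∀ i, Ordinal.typein (α := (aleph β).ord.ToType) (· < ·) (bb i)
          = (aleph (idx i)).ord := fun i => Ordinal.typein_enum _ _
      set t : β.ToType → Set T := fun i => {a ∈ s | f a < bb i} with htdef
      have hts : ∀ i, t i ⊆ s := fun i => sep_subset _ _
      have htc : ∀ i, #(t i) ≤ aleph (idx i) := by
        intro i
        have h2 : #(t i) = #(f '' t i) := (mk_image_eq_of_injOn f _ (hf.mono (hts i))).symm
        have h3 : f '' t i ⊆ {c | c < bb i} := by rintro - ⟨a, ha, rfl⟩; exact ha.2
        have h5 : (Ordinal.typein (α := (aleph β).ord.ToType) (· < ·) (bb i)).card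
            ≤ aleph (idx i) := by rw [htypein i, card_ord]
        rw [h2]
        exact (mk_le_mk_of_subset h3).trans (le_of_eq_of_le (Ordinal.card_typein (r := ((· < ·) : (aleph β).ord.ToType → _ → Prop)) (bb i)) h5)
      choose Xf hXf hXfc using fun i => IH (idx i) (hidxlt i) ((hidxlt i).trans hβ) (t i) (htc i)
      refine ⟨⋃ i, Xf i, famOn_iUnion hts hXf ?_, ?_⟩
      · intro y hys hy
        refine exists_inter_aleph_one hy ?_
        intro a ha
        have h6 : (Ordinal.typein (α := (aleph β).ord.ToType) (· < ·) (f a)).card < aleph β :=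
          lt_ord.1 (Ordinal.typein_lt_self (f a))
        obtain ⟨δ, hδβ2, h7⟩ : ∃ δ, δ < β ∧
            (Ordinal.typein (α := (aleph β).ord.ToType) (· < ·) (f a)).card < aleph δ := by
          rcases lt_or_ge (Ordinal.typein (α := (aleph β).ord.ToType) (· < ·) (f a)).card ℵ₀
            with hsml | hbig
          · exact ⟨0, hlim.pos, by rwa [aleph_zero]⟩
          · obtain ⟨ε, hε⟩ := Cardinal.mem_range_aleph_iff.2 hbig
            have hεβ : ε < β := aleph_lt_aleph.1 (show aleph ε < aleph β by rw [hε]; exact h6)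
            exact ⟨Order.succ ε, hlim.succ_lt hεβ,
              by rw [← hε]; exact aleph_lt_aleph.2 (Order.lt_succ ε)⟩
        set i := (ToType.mk (o := β)) ⟨δ, hδβ2⟩ with hi
        have hidxi : idx i = δ := by
          have h8 : ((ToType.mk (o := β))).symm ((ToType.mk (o := β)) ⟨δ, hδβ2⟩) = ⟨δ, hδβ2⟩ :=
            ((ToType.mk (o := β))).symm_apply_apply _
          rw [hidx, hi]
          exact congrArg Subtype.val h8
        refine mem_iUnion.2 ⟨i, hys ha, ?_⟩
        have h9 : Ordinal.typein (α := (aleph β).ord.ToType) (· < ·) (f a)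
            < Ordinal.typein (α := (aleph β).ord.ToType) (· < ·) (bb i) := by
          rw [htypein i, hidxi]
          exact lt_ord.2 h7
        exact (Ordinal.typein_lt_typein _).1 h9
      · have hXfc' : ∀ i, #(Xf i) ≤ aleph β * #X₀ := fun i =>
          (hXfc i).trans (mul_le_mul' (aleph_le_aleph.2 (hidxlt i).le) le_rfl)
        refine (mk_iUnion_bound hXfc').trans ?_
        have h8 : #β.ToType ≤ aleph β := by
          rw [mk_toType]; exact hcβ.trans (aleph0_le_aleph β)
        calc #β.ToType * (aleph β * #X₀) ≤ aleph β * (aleph β * #X₀) := mul_le_mul' h8 le_rfl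
        _ = (aleph β * aleph β) * #X₀ := (mul_assoc _ _ _).symm
        _ = aleph β * #X₀ := by rw [Cardinal.mul_eq_self (aleph0_le_aleph β)]

end StickAux


namespace StickAux

open Ordinal

theorem famOn_univ_of_isStickFam {l : Cardinal.{u}} {X : Set (Set l.ord.ToType)}
    (h : IsStickFam l X) : FamOn (univ : Set l.ord.ToType) X :=
  ⟨fun x hx => ⟨subset_univ x, h.1 x hx⟩, fun y _ hy => h.2 y hy⟩

theorem isStickFam_of_famOn_univ {l : Cardinal.{u}} {X : Set (Set l.ord.ToType)}
    (h : FamOn (univ : Set l.ord.ToType) X) : IsStickFam l X :=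
  ⟨fun x hx => (h.1 x hx).2, fun y hy => h.2 y (subset_univ y) hy⟩

theorem mkW : #(aleph 1 : Cardinal.{u}).ord.ToType = aleph 1 := by
  rw [mk_toType, card_ord]

theorem stickSet_nonempty :
    {c | ∃ X : Set (Set (aleph 1 : Cardinal.{u}).ord.ToType),
      IsStickFam (aleph 1) X ∧ #X = c}.Nonempty := by
  refine ⟨_, {x : Set (aleph 1 : Cardinal.{u}).ord.ToType | #x = ℵ₀}, ⟨fun x hx => hx, ?_⟩, rfl⟩
  intro y hy
  have h1 : ℵ₀ ≤ #y := by rw [hy]; exact aleph0_le_aleph 1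
  obtain ⟨p, hp, hpc⟩ := Cardinal.le_mk_iff_exists_subset.1 h1
  exact ⟨p, hpc, hp⟩

theorem stick_mem : ∃ X : Set (Set (aleph 1 : Cardinal.{u}).ord.ToType),
    IsStickFam (aleph 1) X ∧ #X = stick :=
  csInf_mem stickSet_nonempty

theorem aleph_one_le_stick : (aleph 1 : Cardinal.{u}) ≤ stick := by
  unfold stick stickL
  refine le_csInf stickSet_nonempty ?_
  rintro c ⟨X, hX, rfl⟩
  by_contra hc
  have hXle : #X ≤ ℵ₀ := le_aleph0_of_lt_aleph_one (not_le.1 hc)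
  have hpick : ∀ x : ↥X, ∃ a : (aleph 1 : Cardinal.{u}).ord.ToType, a ∈ (x : Set _) := by
    intro x
    have h1 : #(↥(x : Set (aleph 1 : Cardinal.{u}).ord.ToType)) = ℵ₀ := hX.1 x x.2
    have h2 : Nonempty (↥(x : Set (aleph 1 : Cardinal.{u}).ord.ToType)) :=
      mk_ne_zero_iff.1 (by rw [h1]; exact aleph0_ne_zero)
    obtain ⟨a⟩ := h2
    exact ⟨a, a.2⟩
  choose g hg using hpick
  have hA : #(range g) < #(aleph 1 : Cardinal.{u}).ord.ToType := by
    rw [mkW]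
    exact (mk_range_le.trans hXle).trans_lt aleph0_lt_aleph_one
  have hinf : Infinite (aleph 1 : Cardinal.{u}).ord.ToType :=
    Cardinal.infinite_iff.2 (by rw [mkW]; exact aleph0_le_aleph 1)
  have hcompl : #((range g)ᶜ : Set (aleph 1 : Cardinal.{u}).ord.ToType) = aleph 1 := by
    rw [mk_compl_of_infinite _ hA, mkW]
  obtain ⟨x, hxX, hxsub⟩ := hX.2 _ hcompl
  exact (hxsub (hg (⟨x, hxX⟩ : ↥X))) (mem_range_self (f := g) (⟨x, hxX⟩ : ↥X))

theorem stick_le_of_fam {κ : Cardinal.{u}} (hκ : aleph 1 ≤ κ) {X : Set (Set κ.ord.ToType)}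
    (hm : ∀ x ∈ X, #x = ℵ₀)
    (hc : ∀ y : Set κ.ord.ToType, #y = aleph 1 → ∃ x ∈ X, x ⊆ y) :
    stick ≤ #X := by
  have hT : #κ.ord.ToType = κ := by rw [mk_toType, card_ord]
  obtain ⟨y₀, hy₀⟩ := Cardinal.le_mk_iff_exists_set.1 (show aleph 1 ≤ #κ.ord.ToType by
    rw [hT]; exact hκ)
  have hF : FamOn y₀ {x ∈ X | x ⊆ y₀} := by
    constructor
    · rintro x ⟨hxX, hxy⟩; exact ⟨hxy, hm x hxX⟩
    · intro y hyy hy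
      obtain ⟨x, hxX, hxy⟩ := hc y hy
      exact ⟨x, ⟨hxX, hxy.trans hyy⟩, hxy⟩
  have hne : Nonempty κ.ord.ToType :=
    mk_ne_zero_iff.1 (by rw [hT]; exact ((aleph_pos 1).trans_le hκ).ne')
  obtain ⟨f, hf, hfs⟩ := exists_injOn (s := (univ : Set (aleph 1 : Cardinal.{u}).ord.ToType))
    (t := y₀) (by rw [mk_univ, mkW, hy₀])
  obtain ⟨X₁, hX₁, hX₁c⟩ := famOn_pullback hF f hf hfs
  have h2 : stick ≤ #X₁ := by
    unfold stick stickL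
    exact csInf_le' ⟨X₁, isStickFam_of_famOn_univ hX₁, rfl⟩
  exact h2.trans (hX₁c.trans (mk_le_mk_of_subset (sep_subset _ _)))

end StickAux


namespace StickAux

theorem lift_aleph_one : Cardinal.lift.{v, u} (aleph 1) = aleph 1 := by
  rw [Cardinal.lift_aleph, Ordinal.lift_one]

theorem lift_aleph_omega1 :
    Cardinal.lift.{v, u} (aleph ((aleph 1).ord)) = aleph ((aleph 1).ord) := by
  rw [Cardinal.lift_aleph, Cardinal.lift_ord, Cardinal.lift_aleph, Ordinal.lift_one]

theorem stick_lift_le : Cardinal.lift.{v, u} stick.{u} ≤ Cardinal.lift.{u, v} stick.{v} := by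
  obtain ⟨X, hX, hXc⟩ := stick_mem.{v}
  have hWW : Cardinal.lift.{u} #(aleph 1 : Cardinal.{v}).ord.ToType
      = Cardinal.lift.{v} #(aleph 1 : Cardinal.{u}).ord.ToType := by
    rw [mkW, mkW, lift_aleph_one, lift_aleph_one]
  obtain ⟨e⟩ := Cardinal.lift_mk_eq'.1 hWW
  have hmem : ∀ x ∈ X, #(↥((fun x => e '' x) x)) = ℵ₀ := by
    intro x hx
    have h1 : #(↥x) = ℵ₀ := hX.1 x hx
    have hc : Countable ↥x := mk_le_aleph0_iff.1 h1.le
    have hi : Infinite ↥x := Cardinal.infinite_iff.2 h1.ge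
    have heq := Equiv.Set.image e x e.injective
    have hc2 : Countable ↥(e '' x) := Countable.of_equiv _ heq
    have hi2 : Infinite ↥(e '' x) := Infinite.of_injective heq heq.injective
    exact mk_eq_aleph0 _
  have hfam : IsStickFam (aleph 1) ((fun x => e '' x) '' X) := by
    constructor
    · rintro - ⟨x, hx, rfl⟩
      exact hmem x hx
    · intro y hy
      have h3 : Cardinal.lift.{u} #(↥(e.symm '' y)) = Cardinal.lift.{v} #(↥y) :=
        Cardinal.lift_mk_eq'.2 ⟨(Equiv.Set.image e.symm y e.symm.injective).symm⟩
      have h2 : #(↥(e.symm '' y)) = aleph 1 := by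
        apply Cardinal.lift_inj.1
        rw [h3, hy, lift_aleph_one, lift_aleph_one]
      obtain ⟨x, hxX, hxy⟩ := hX.2 (e.symm '' y) h2
      refine ⟨e '' x, mem_image_of_mem _ hxX, ?_⟩
      have h4 : e '' (e.symm '' y) = y := by
        ext b; simp
      exact (image_mono (f := e) hxy).trans h4.le
  have h5 : stick.{u} ≤ #((fun x => e '' x) '' X) := by
    unfold stick stickL
    exact csInf_le' ⟨_, hfam, rfl⟩
  calc Cardinal.lift.{v} stick.{u} ≤ Cardinal.lift.{v} #((fun x => e '' x) '' X) :=
        Cardinal.lift_le.2 h5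
  _ = Cardinal.lift.{u} #X :=
        Cardinal.mk_image_eq_lift _ X (Set.image_injective.2 e.injective)
  _ = Cardinal.lift.{u} stick.{v} := by rw [hXc]

theorem stick_lt_transfer (h : stick.{u} < aleph ((aleph 1).ord)) :
    stick.{v} < aleph ((aleph 1).ord) := by
  have h1 : Cardinal.lift.{u} stick.{v} ≤ Cardinal.lift.{v} stick.{u} := stick_lift_le.{v, u}
  have h2 : Cardinal.lift.{v} stick.{u} < Cardinal.lift.{v} (aleph ((aleph 1).ord)) :=
    Cardinal.lift_lt.2 h
  have h3 : Cardinal.lift.{u} stick.{v} < Cardinal.lift.{u} (aleph ((aleph 1).ord)) := by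
    refine lt_of_le_of_lt h1 (lt_of_lt_of_eq h2 ?_)
    rw [lift_aleph_omega1, lift_aleph_omega1]
  exact Cardinal.lift_lt.1 h3

theorem main_univ (h : stick.{u} < aleph ((aleph 1).ord)) :
    stick.{u} = stick'.{u} ∧ stick''.{u} ≤ stick.{u} := by
  have hst1 : aleph 1 ≤ stick := StickAux.aleph_one_le_stick
  have hst0 : ℵ₀ ≤ stick := (aleph0_le_aleph 1).trans hst1
  obtain ⟨γ, hγ⟩ := Cardinal.mem_range_aleph_iff.2 hst0
  have hγ1 : γ < (aleph 1).ord := by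
    refine Cardinal.aleph_lt_aleph.1 ?_
    rw [hγ]
    exact h
  obtain ⟨X₀, hX₀, hX₀c⟩ := StickAux.stick_mem
  have h₀ := StickAux.famOn_univ_of_isStickFam hX₀
  have hT : #stick.ord.ToType = stick := by rw [mk_toType, Cardinal.card_ord]
  obtain ⟨X, hX, hXc⟩ := StickAux.key h₀ StickAux.mkW γ hγ1 (univ : Set stick.ord.ToType)
    (by rw [mk_univ, hT]; exact hγ.ge)
  rw [hX₀c, hγ, Cardinal.mul_eq_self hst0] at hXc
  -- padding so that the family has size exactly `stick`
  have hembW : #(aleph 1).ord.ToType ≤ #stick.ord.ToType := by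
    rw [StickAux.mkW, hT]; exact hst1
  obtain ⟨g⟩ := (Cardinal.le_def _ _).1 hembW
  have hXpc : #((fun x => g '' x) '' X₀) = stick := by
    rw [Cardinal.mk_image_eq (Set.image_injective.2 g.injective), hX₀c]
  have hXpm : ∀ x ∈ (fun x => g '' x) '' X₀, #x = ℵ₀ := by
    rintro - ⟨x, hx, rfl⟩
    rw [Cardinal.mk_image_eq g.injective]
    exact hX₀.1 x hx
  have hXfinc : #(X ∪ (fun x => g '' x) '' X₀ : Set (Set stick.ord.ToType)) = stick := by
    apply le_antisymm
    · refine (mk_union_le _ _).trans ?_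
      calc #X + #((fun x => g '' x) '' X₀) ≤ stick + stick := add_le_add hXc hXpc.le
      _ = stick := Cardinal.add_eq_self hst0
    · exact le_of_eq_of_le hXpc.symm (mk_le_mk_of_subset subset_union_right)
  have hXfinFam : StickAux.FamOn (univ : Set stick.ord.ToType)
      (X ∪ (fun x => g '' x) '' X₀) := by
    constructor
    · intro x hx
      rw [mem_union] at hx
      rcases hx with hx | hx
      · exact hX.1 x hx
      · exact ⟨subset_univ x, hXpm x hx⟩
    · intro y hys hy
      obtain ⟨x, hxX, hxy⟩ := hX.2 y hys hy
      exact ⟨x, mem_union_left _ hxX, hxy⟩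
  have hmem' : stick ∈ {k | aleph 1 ≤ k ∧
      ∃ X : Set (Set k.ord.ToType), IsStickFam k X ∧ #X = k} :=
    ⟨hst1, _, StickAux.isStickFam_of_famOn_univ hXfinFam, hXfinc⟩
  have hmem'' : stick ∈ {k | aleph 1 ≤ k ∧ ∃ X : Set (Set k.ord.ToType),
      (∀ x ∈ X, #x = ℵ₀) ∧ (∀ y : Set k.ord.ToType, #y = k → ∃ x ∈ X, x ⊆ y) ∧ #X = k} := by
    refine ⟨hst1, _, fun x hx => (hXfinFam.1 x hx).2, ?_, hXfinc⟩
    intro y hy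
    have h1 : aleph 1 ≤ #y := by rw [hy]; exact hst1
    obtain ⟨p, hp, hpc⟩ := Cardinal.le_mk_iff_exists_subset.1 h1
    obtain ⟨x, hxX, hxp⟩ := hXfinFam.2 p (subset_univ p) hpc
    exact ⟨x, hxX, hxp.trans hp⟩
  constructor
  · apply le_antisymm
    · unfold stick'
      refine le_csInf ⟨stick, hmem'⟩ ?_
      rintro k ⟨hk1, Xk, hXk, hXkc⟩
      exact le_of_le_of_eq (StickAux.stick_le_of_fam hk1 hXk.1 hXk.2) hXkc
    · unfold stick'
      exact csInf_le' hmem'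
  · unfold stick''
    exact csInf_le' hmem''

end StickAux

theorem stick_eq_stick'_of_lt_aleph_omega1 (h : stick < aleph (aleph 1).ord) :
    stick = stick' ∧ stick'' ≤ stick :=
  ⟨(StickAux.main_univ (StickAux.stick_lt_transfer h)).1,
    (StickAux.main_univ (StickAux.stick_lt_transfer h)).2⟩
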